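/- If P \subset \mathbb{R}^d is a lattice polytope of size n (having n lattice points) and P has width W with respect to a functional \ell with \ell(P) = [0,W], and there exists a lattice point q in \ell^{-1}([0,W]) \setminus P, then there exists a lattice polytope P' of size n+1 and width exactly W with P \subsetneq P'. -/

import Mathlib

open Set MeasureTheory

noncomputable section

/-- Cast an integer point to a real point. -/
def ratl {d : ℕ} (x : Fin d → ℤ) : Fin d → ℝ := fun i => (x i : ℝ)

/-- A lattice polytope: convex hull of finitely many integer points. -/
def IsLatticePolytope {d : ℕ} (P : Set (Fin d → ℝ)) : Prop :=
  ∃ V : Finset (Fin d → ℤ), V.Nonempty ∧ P = convexHull ℝ (ratl '' ↑V)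

/-- Width of a set with respect to an integer linear functional. -/
def widthF {d : ℕ} (P : Set (Fin d → ℝ)) (l : Fin d → ℤ) : ℝ :=
  sSup ((fun pq : (Fin d → ℝ) × (Fin d → ℝ) =>
    |∑ i, (l i : ℝ) * (pq.1 i - pq.2 i)|) '' (P ×ˢ P))

/-- Lattice width: min over nonzero integer functionals. -/
def latWidth {d : ℕ} (P : Set (Fin d → ℝ)) : ℝ :=
  sInf (Set.range fun l : {l : Fin d → ℤ // l ≠ 0} => widthF P l.1)

/-- Number of lattice points of a set. -/
def latticeSize {d : ℕ} (P : Set (Fin d → ℝ)) : ℕ :=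
  {x : Fin d → ℤ | ratl x ∈ P}.ncard

/-- Integer affine map, acting on real points. -/
def affMap {d : ℕ} (A : Matrix (Fin d) (Fin d) ℤ) (b : Fin d → ℤ) (x : Fin d → ℝ) :
    Fin d → ℝ :=
  (A.map (Int.cast : ℤ → ℝ)).mulVec x + ratl b

/-- Unimodular equivalence of subsets of ℝ^d. -/
def UnimodEquiv {d : ℕ} (P P' : Set (Fin d → ℝ)) : Prop :=
  ∃ (A : Matrix (Fin d) (Fin d) ℤ) (b : Fin d → ℤ), IsUnit A.det ∧ affMap A b '' P = P'

/-- Projection forgetting the last coordinate. -/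
def proj {d : ℕ} (x : Fin (d+1) → ℝ) : Fin d → ℝ := fun i => x i.castSucc

/-- Equivalence of lifts: a unimodular equivalence commuting with the projection. -/
def LiftEquiv {d : ℕ} (P₁ P₂ : Set (Fin (d+1) → ℝ)) : Prop :=
  ∃ (A : Matrix (Fin (d+1)) (Fin (d+1)) ℤ) (b : Fin (d+1) → ℤ), IsUnit A.det ∧
    affMap A b '' P₁ = P₂ ∧ ∀ x ∈ P₁, proj (affMap A b x) = proj x

open Bornology

lemma ratl_injective {d : ℕ} : Function.Injective (ratl (d := d)) := by
  intro x y h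
  funext i
  have := congrFun h i
  simp only [ratl] at this
  exact_mod_cast this

lemma finite_lattice_of_bounded {d : ℕ} {B : Set (Fin d → ℝ)} (h : IsBounded B) :
    {x : Fin d → ℤ | ratl x ∈ B}.Finite := by
  obtain ⟨R, hR⟩ := isBounded_iff_forall_norm_le.1 h
  apply Set.Finite.subset (Set.Finite.pi (t := fun _ : Fin d => Set.Icc (-⌈R⌉) ⌈R⌉)
    (fun _ => Set.finite_Icc _ _))
  intro x hx
  simp only [Set.mem_pi, Set.mem_univ, Set.mem_Icc, forall_true_left]
  intro i
  have h1 : ‖ratl x i‖ ≤ R := le_trans (norm_le_pi_norm (ratl x) i) (hR _ hx)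
  have h2 : |(x i : ℝ)| ≤ (⌈R⌉ : ℝ) := le_trans h1 (Int.le_ceil R)
  rw [abs_le] at h2
  constructor <;> [exact_mod_cast h2.1; exact_mod_cast h2.2]

lemma key_extreme {d : ℕ} {P : Set (Fin d → ℝ)} (hP : Convex ℝ P) (hne : P.Nonempty)
    {a b : Fin d → ℝ} (ha : a ∉ P)
    (hab : a ∈ convexHull ℝ (insert b P))
    (hba : b ∈ convexHull ℝ (insert a P)) : a = b := by
  rw [convexHull_insert hne, hP.convexHull_eq] at hab hba
  rw [mem_convexJoin] at hab hba
  obtain ⟨b', hb', z₁, hz₁, hseg₁⟩ := hab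
  obtain ⟨a', ha', z₂, hz₂, hseg₂⟩ := hba
  rw [mem_singleton_iff] at hb' ha'
  rw [hb'] at hseg₁
  rw [ha'] at hseg₂
  obtain ⟨s, t, hs, ht, hst, habe⟩ := hseg₁
  obtain ⟨u, v, hu, hv, huv, hbae⟩ := hseg₂
  by_cases h1 : s * u = 1
  · have hs1 : s = 1 := by nlinarith
    have ht0 : t = 0 := by linarith
    rw [hs1, ht0, one_smul, zero_smul, add_zero] at habe
    exact habe.symm
  · have hsu : s * u < 1 := lt_of_le_of_ne (by nlinarith) h1
    have hc : (0:ℝ) < 1 - s * u := by linarith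
    have e : (1 - s * u) • a = (s * v) • z₂ + t • z₁ := by
      have h := habe
      rw [← hbae, smul_add, smul_smul, smul_smul] at h
      rw [sub_smul, one_smul]
      nth_rewrite 1 [← h]
      abel
    have ha2 : a = ((1 - s*u)⁻¹ * (s * v)) • z₂ + ((1 - s*u)⁻¹ * t) • z₁ := by
      have h2 : a = (1 - s*u)⁻¹ • ((1 - s*u) • a) := by
        rw [smul_smul, inv_mul_cancel₀ hc.ne', one_smul]
      rw [h2, e, smul_add, smul_smul, smul_smul]
    exact absurd (ha2 ▸ hP hz₂ hz₁ (by positivity) (by positivity)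
      (by field_simp; nlinarith)) ha

/-- A lattice polytope of size n and width W realized by ℓ with ℓ(P) = [0,W] can be
enlarged by one lattice point keeping the width. -/
theorem enlarge_by_one_point (d n W : ℕ) (P : Set (Fin d → ℝ)) (l : Fin d → ℤ)
    (hP : IsLatticePolytope P) (hsize : latticeSize P = n)
    (hl : l ≠ 0) (hwidth : latWidth P = (W : ℝ))
    (himg : (fun p => ∑ i, (l i : ℝ) * p i) '' P = Set.Icc (0 : ℝ) (W : ℝ))
    (q : Fin d → ℤ) (hq1 : (∑ i, (l i : ℝ) * (q i : ℝ)) ∈ Set.Icc (0 : ℝ) (W : ℝ))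
    (hq2 : ratl q ∉ P) :
    ∃ P' : Set (Fin d → ℝ), IsLatticePolytope P' ∧ latticeSize P' = n + 1 ∧
      latWidth P' = (W : ℝ) ∧ P ⊂ P' := by
  classical
  obtain ⟨V, hVne, hPV⟩ := hP
  have hPconv : Convex ℝ P := hPV ▸ convex_convexHull ℝ _
  obtain ⟨v₀, hv₀⟩ := hVne
  have hv₀P : ratl v₀ ∈ P := hPV ▸ subset_convexHull ℝ _
    (Set.mem_image_of_mem ratl (Finset.mem_coe.mpr hv₀))
  have hPne : P.Nonempty := ⟨ratl v₀, hv₀P⟩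
  set lr : (Fin d → ℝ) → ℝ := fun p => ∑ i, (l i : ℝ) * p i with hlr
  set slab : Set (Fin d → ℝ) := {x | lr x ∈ Set.Icc (0:ℝ) (W:ℝ)} with hslabdef
  have hslab : Convex ℝ slab := by
    intro x hx y hy a b ha hb hab
    have hxy : lr (a • x + b • y) = a * lr x + b * lr y := by
      simp only [hlr, Pi.add_apply, Pi.smul_apply, smul_eq_mul, Finset.mul_sum]
      rw [← Finset.sum_add_distrib]
      apply Finset.sum_congr rfl; intros; ring
    have := (convex_Icc (0:ℝ) (W:ℝ)) hx hy ha hb hab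
    simp only [hslabdef, mem_setOf_eq, hxy]
    simpa [smul_eq_mul] using this
  have hPslab : P ⊆ slab := fun x hx => by
    show lr x ∈ Set.Icc (0:ℝ) (W:ℝ)
    rw [← himg]
    exact Set.mem_image_of_mem _ hx
  set Q := convexHull ℝ (insert (ratl q) P) with hQdef
  have hPQ : P ⊆ Q := (Set.subset_insert _ _).trans (subset_convexHull ℝ _)
  have hqQ : ratl q ∈ Q := subset_convexHull ℝ _ (Set.mem_insert _ _)
  have hqslab : ratl q ∈ slab := hq1
  have hQslab : Q ⊆ slab := convexHull_min (Set.insert_subset hqslab hPslab) hslab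
  have hQbdd : IsBounded Q := by
    have hQ2 : Q = convexHull ℝ (insert (ratl q) (ratl '' ↑V)) := by
      rw [hQdef, hPV, ← Set.singleton_union, ← Set.singleton_union,
        convexHull_convexHull_union_right]
    rw [hQ2, isBounded_convexHull]
    exact ((V.finite_toSet.image ratl).insert _).isBounded
  have hLPfin : {x : Fin d → ℤ | ratl x ∈ P}.Finite :=
    finite_lattice_of_bounded (hQbdd.subset hPQ)
  set C : Set (Fin d → ℤ) := {x | ratl x ∈ Q ∧ ratl x ∉ P} with hCdef
  have hCfin : C.Finite := (finite_lattice_of_bounded hQbdd).subset (fun x hx => hx.1)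
  have hCne : C.Nonempty := ⟨q, hqQ, hq2⟩
  set N : (Fin d → ℤ) → ℕ :=
    fun x => {y : Fin d → ℤ | ratl y ∈ convexHull ℝ (insert (ratl x) P)}.ncard with hNdef
  obtain ⟨q', hq'C, hq'min⟩ := Set.exists_min_image C N hCfin hCne
  set P' := convexHull ℝ (insert (ratl q') P) with hP'def
  have hP'Q : P' ⊆ Q := convexHull_min (Set.insert_subset hq'C.1 hPQ) (convex_convexHull ℝ _)
  have hq'P' : ratl q' ∈ P' := subset_convexHull ℝ _ (Set.mem_insert _ _)
  have hPP' : P ⊆ P' := (Set.subset_insert _ _).trans (subset_convexHull ℝ _)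
  have hfinP' : {x : Fin d → ℤ | ratl x ∈ P'}.Finite :=
    finite_lattice_of_bounded (hQbdd.subset hP'Q)
  have hLP' : {x : Fin d → ℤ | ratl x ∈ P'} = insert q' {x : Fin d → ℤ | ratl x ∈ P} := by
    apply Set.Subset.antisymm
    · intro x hx
      by_contra hcon
      rw [Set.mem_insert_iff] at hcon
      push_neg at hcon
      obtain ⟨hxq', hxP⟩ := hcon
      have hxC : x ∈ C := ⟨hP'Q hx, hxP⟩
      have hmin := hq'min x hxC
      have hsub : convexHull ℝ (insert (ratl x) P) ⊆ P' :=
        convexHull_min (Set.insert_subset hx hPP') (convex_convexHull ℝ _)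
      have hq'not : ratl q' ∉ convexHull ℝ (insert (ratl x) P) := by
        intro hcon2
        exact hxq' (ratl_injective (key_extreme hPconv hPne hq'C.2 hcon2 hx)).symm
      have hlt : N x < N q' := by
        apply Set.ncard_lt_ncard _ hfinP'
        constructor
        · exact fun y hy => hsub hy
        · intro hsup
          exact hq'not (hsup hq'P')
      omega
    · rw [Set.insert_subset_iff]
      exact ⟨hq'P', fun x hx => hPP' hx⟩
  have hsize' : latticeSize P' = n + 1 := by
    show {x : Fin d → ℤ | ratl x ∈ P'}.ncard = n + 1
    rw [hLP', Set.ncard_insert_of_notMem (show q' ∉ {x : Fin d → ℤ | ratl x ∈ P} from hq'C.2) hLPfin]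
    have hs : {x : Fin d → ℤ | ratl x ∈ P}.ncard = n := hsize
    omega
  have hwnonneg : ∀ (S : Set (Fin d → ℝ)) (l' : Fin d → ℤ), 0 ≤ widthF S l' := by
    intro S l'
    apply Real.sSup_nonneg
    rintro x ⟨pq, _, rfl⟩
    exact abs_nonneg _
  have hbddbelow : ∀ S : Set (Fin d → ℝ),
      BddBelow (Set.range fun l' : {l : Fin d → ℤ // l ≠ 0} => widthF S l'.1) :=
    fun S => ⟨0, by rintro y ⟨l', rfl⟩; exact hwnonneg S l'.1⟩
  have hsum : ∀ (l' : Fin d → ℤ) (p r : Fin d → ℝ),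
      ∑ i, (l' i:ℝ) * (p i - r i) = (∑ i, (l' i:ℝ) * p i) - ∑ i, (l' i:ℝ) * r i := by
    intro l' p r
    rw [← Finset.sum_sub_distrib]
    apply Finset.sum_congr rfl; intros; ring
  obtain ⟨R, hR⟩ := isBounded_iff_forall_norm_le.1 hQbdd
  have hbddA : ∀ l' : Fin d → ℤ, BddAbove ((fun pq : (Fin d → ℝ) × (Fin d → ℝ) =>
      |∑ i, (l' i : ℝ) * (pq.1 i - pq.2 i)|) '' (P' ×ˢ P')) := by
    intro l'
    refine ⟨(∑ i, |(l' i:ℝ)|) * (2*R), ?_⟩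
    rintro y ⟨⟨p, r⟩, hpr, rfl⟩
    rw [Set.mem_prod] at hpr
    have hpn : ‖p‖ ≤ R := hR _ (hP'Q hpr.1)
    have hrn : ‖r‖ ≤ R := hR _ (hP'Q hpr.2)
    calc |∑ i, (l' i:ℝ) * (p i - r i)| ≤ ∑ i, |(l' i:ℝ) * (p i - r i)| :=
          Finset.abs_sum_le_sum_abs _ _
      _ ≤ ∑ i, |(l' i:ℝ)| * (2*R) := by
          apply Finset.sum_le_sum
          intro i _
          rw [abs_mul]
          apply mul_le_mul_of_nonneg_left _ (abs_nonneg _)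
          have hp : |p i| ≤ R := le_trans (le_trans (le_of_eq (Real.norm_eq_abs _).symm)
            (norm_le_pi_norm p i)) hpn
          have hr : |r i| ≤ R := le_trans (le_trans (le_of_eq (Real.norm_eq_abs _).symm)
            (norm_le_pi_norm r i)) hrn
          have h3 : |p i - r i| ≤ |p i| + |r i| := by
            rw [sub_eq_add_neg]
            exact (abs_add_le _ _).trans (by rw [abs_neg])
          linarith
      _ = (∑ i, |(l' i:ℝ)|) * (2*R) := by rw [Finset.sum_mul]
  have hmono : ∀ l' : Fin d → ℤ, widthF P l' ≤ widthF P' l' := by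
    intro l'
    apply csSup_le_csSup (hbddA l')
    · exact ⟨_, ⟨(ratl v₀, ratl v₀), Set.mem_prod.2 ⟨hv₀P, hv₀P⟩, rfl⟩⟩
    · exact Set.image_mono (Set.prod_mono hPP' hPP')
  have hW_le : ∀ (l'' : Fin d → ℤ) (h : l'' ≠ 0), (W:ℝ) ≤ widthF P' l'' := by
    intro l'' h
    have h1 : latWidth P ≤ widthF P l'' := csInf_le (hbddbelow P) ⟨⟨l'', h⟩, rfl⟩
    rw [hwidth] at h1
    exact h1.trans (hmono l'')
  have hup : widthF P' l ≤ (W:ℝ) := by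
    apply Real.sSup_le _ (by positivity)
    rintro y ⟨⟨p, r⟩, hpr, rfl⟩
    rw [Set.mem_prod] at hpr
    have hp := hQslab (hP'Q hpr.1)
    have hr := hQslab (hP'Q hpr.2)
    simp only [hslabdef, mem_setOf_eq, Set.mem_Icc, hlr] at hp hr
    show |∑ i, (l i:ℝ) * (p i - r i)| ≤ (W:ℝ)
    rw [hsum]
    rw [abs_le]
    constructor <;> [linarith [hp.1, hp.2, hr.1, hr.2]; linarith [hp.1, hp.2, hr.1, hr.2]]
  have hlow : (W:ℝ) ≤ latWidth P' :=
    le_csInf ⟨_, ⟨⟨l, hl⟩, rfl⟩⟩ (by rintro y ⟨⟨l'', h⟩, rfl⟩; exact hW_le l'' h)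
  have hupW : latWidth P' ≤ (W:ℝ) := (csInf_le (hbddbelow P') ⟨⟨l, hl⟩, rfl⟩).trans hup
  refine ⟨P', ?_, hsize', le_antisymm hupW hlow, ?_⟩
  · refine ⟨insert q' V, ⟨q', Finset.mem_insert_self _ _⟩, ?_⟩
    rw [hP'def, hPV, Finset.coe_insert, Set.image_insert_eq, ← Set.singleton_union,
      ← Set.singleton_union, convexHull_convexHull_union_right]
  · exact (Set.ssubset_iff_of_subset hPP').2 ⟨ratl q', hq'P', hq'C.2⟩
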